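/- Let g be a holomorphic self-map of the unit disc with nonvanishing derivative, and suppose there is a constant c such that g''(z) = -2c·g'(z)^{3/2} for all z in the disc (for a fixed holomorphic branch of g'(z)^{1/2}). Then for every holomorphic function f on the disc, every complex number ℓ, and every nonnegative integer k, the k-th derivative of (g')^ℓ·(f∘g) equals the sum over i = 0,…,k of binom(k,i)·(2ℓ+i)_{k-i}·(-c)^{k-i}·(g')^{ℓ+(k+i)/2}·(f^{(i)}∘g), where powers of g' are defined via the fixed branch. -/

import Mathlib

open Complex Metric Finset

noncomputable def pcAux (x c : ℂ) (k i : ℕ) : ℂ :=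
  (k.choose i : ℂ) * (ascPochhammer ℂ (k - i)).eval (x + i) * (-c) ^ (k - i)

lemma pochLeft (n : ℕ) (y : ℂ) :
    (ascPochhammer ℂ (n+1)).eval y = y * (ascPochhammer ℂ n).eval (y+1) := by
  rw [ascPochhammer_succ_left]
  simp [Polynomial.eval_comp]

lemma pcAux_gt (x c : ℂ) {k i : ℕ} (h : k < i) : pcAux x c k i = 0 := by
  simp [pcAux, Nat.choose_eq_zero_of_lt h]

lemma pcAux_self (x c : ℂ) (k : ℕ) : pcAux x c k k = 1 := by
  simp [pcAux, Nat.sub_self]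

lemma pcAux_zero (x c : ℂ) (k : ℕ) :
    pcAux x c (k+1) 0 = (-c) * (x + (k:ℂ)) * pcAux x c k 0 := by
  simp only [pcAux, Nat.choose_zero_right, Nat.cast_one, Nat.sub_zero, Nat.cast_zero,
    ascPochhammer_succ_eval]
  ring

lemma pcAux_succ (x c : ℂ) (k i : ℕ) (hik : i ≤ k) :
    pcAux x c (k+1) (i+1)
      = (-c) * (x + (k:ℂ) + ((i+1 : ℕ):ℂ)) * pcAux x c k (i+1) + pcAux x c k i := by
  rcases eq_or_lt_of_le hik with rfl | hlt
  · rw [pcAux_gt x c (Nat.lt_succ_self i), pcAux_self, pcAux_self]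
    ring
  · obtain ⟨n, rfl⟩ : ∃ n, k = i + 1 + n := ⟨k - (i+1), by omega⟩
    simp only [pcAux]
    rw [show i + 1 + n + 1 - (i + 1) = n + 1 from by omega,
        show i + 1 + n - (i + 1) = n from by omega,
        show i + 1 + n - i = n + 1 from by omega,
        ascPochhammer_succ_eval, pochLeft]
    have hcc : ((i + 1 + n).choose (i+1) * (i+1) : ℂ) = ((i + 1 + n).choose i : ℂ) * (n+1) := by
      have := Nat.choose_succ_right_eq (i + 1 + n) i
      have h2 : i + 1 + n - i = n + 1 := by omega
      rw [h2] at this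
      exact_mod_cast congrArg (Nat.cast : ℕ → ℂ) this
    have hch : (((i + 1 + n + 1).choose (i+1) : ℕ) : ℂ)
        = ((i + 1 + n).choose i : ℂ) + ((i + 1 + n).choose (i+1) : ℂ) := by
      rw [Nat.choose_succ_succ]
      push_cast
      ring
    rw [hch]
    push_cast
    rw [show x + ((i:ℂ) + 1) = x + (i:ℂ) + 1 from by ring]
    linear_combination (-(-c)^(n+1) * (ascPochhammer ℂ n).eval (x + i + 1)) * hcc

lemma sum_shift (k : ℕ) (x c : ℂ) (u : ℕ → ℂ) :
    ∑ i ∈ range (k+1), ((-c) * (x + (k:ℂ) + (i:ℂ)) * pcAux x c k i * u i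
        + pcAux x c k i * u (i+1))
      = ∑ i ∈ range (k+1+1), pcAux x c (k+1) i * u i := by
  rw [Finset.sum_add_distrib,
    Finset.sum_range_succ' (fun i => (-c) * (x + (k:ℂ) + (i:ℂ)) * pcAux x c k i * u i) k,
    Finset.sum_range_succ' (fun i => pcAux x c (k+1) i * u i) (k+1),
    Finset.sum_congr rfl (fun i (hi : i ∈ range (k+1)) => by
      rw [pcAux_succ x c k i (Nat.lt_succ_iff.mp (Finset.mem_range.mp hi))]
      ring_nf :
      ∀ i ∈ range (k+1), pcAux x c (k+1) (i+1) * u (i+1)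
        = (-c) * (x + (k:ℂ) + ((i+1 : ℕ):ℂ)) * pcAux x c k (i+1) * u (i+1)
          + pcAux x c k i * u (i+1)),
    Finset.sum_add_distrib,
    Finset.sum_range_succ
      (fun i => (-c) * (x + (k:ℂ) + ((i+1 : ℕ):ℂ)) * pcAux x c k (i+1) * u (i+1)) k,
    pcAux_gt x c (Nat.lt_succ_self k), pcAux_zero]
  push_cast
  ring

theorem deriv_formula_for_multiplier
    (g f L : ℂ → ℂ) (c : ℂ)
    (hg : DifferentiableOn ℂ g (ball (0:ℂ) 1))
    (hgmap : Set.MapsTo g (ball (0:ℂ) 1) (ball (0:ℂ) 1))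
    (hf : DifferentiableOn ℂ f (ball (0:ℂ) 1))
    (hL : DifferentiableOn ℂ L (ball (0:ℂ) 1))
    (hbranch : ∀ z ∈ ball (0:ℂ) 1, Complex.exp (L z) = derivWithin g (ball (0:ℂ) 1) z)
    (hne : ∀ z ∈ ball (0:ℂ) 1, derivWithin g (ball (0:ℂ) 1) z ≠ 0)
    (hsecond : ∀ z ∈ ball (0:ℂ) 1,
      derivWithin (derivWithin g (ball (0:ℂ) 1)) (ball (0:ℂ) 1) z
        = -2 * c * Complex.exp ((3/2 : ℂ) * L z))
    (ℓ : ℂ) (k : ℕ) :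
    ∀ z ∈ ball (0:ℂ) 1,
      iteratedDerivWithin k
          (fun w => Complex.exp (ℓ * L w) * f (g w)) (ball (0:ℂ) 1) z
        = ∑ i ∈ range (k + 1),
            (k.choose i : ℂ) * (ascPochhammer ℂ (k - i)).eval (2 * ℓ + i)
              * (-c) ^ (k - i)
              * Complex.exp ((ℓ + (k + i : ℂ) / 2) * L z)
              * iteratedDerivWithin i f (ball (0:ℂ) 1) (g z) := by
  set s : Set ℂ := ball (0:ℂ) 1 with hs_def
  have hs : IsOpen s := isOpen_ball
  have hu : UniqueDiffOn ℂ s := hs.uniqueDiffOn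
  -- derivative of L
  have hLd : ∀ z ∈ s, HasDerivAt L (-2 * c * Complex.exp ((1/2 : ℂ) * L z)) z := by
    intro z hz
    have h2 : HasDerivAt L (deriv L z) z :=
      (hL.differentiableAt (hs.mem_nhds hz)).hasDerivAt
    have h3 : HasDerivAt (fun w => Complex.exp (L w))
        (Complex.exp (L z) * deriv L z) z := h2.cexp
    have h4 : (fun w => Complex.exp (L w)) =ᶠ[nhds z] derivWithin g s :=
      Filter.eventuallyEq_of_mem (hs.mem_nhds hz) (fun w hw => hbranch w hw)
    have h5 : HasDerivAt (derivWithin g s) (Complex.exp (L z) * deriv L z) z :=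
      h3.congr_of_eventuallyEq h4.symm
    have h6 : Complex.exp (L z) * deriv L z = -2 * c * Complex.exp ((3/2 : ℂ) * L z) := by
      rw [← h5.deriv, ← derivWithin_of_isOpen hs hz, hsecond z hz]
    have h7 : deriv L z = -2 * c * Complex.exp ((1/2 : ℂ) * L z) := by
      have h8 : Complex.exp ((3/2 : ℂ) * L z)
          = Complex.exp ((1/2 : ℂ) * L z) * Complex.exp (L z) := by
        rw [← Complex.exp_add]; ring_nf
      apply mul_left_cancel₀ (Complex.exp_ne_zero (L z))
      rw [h6, h8]; ring
    rwa [h7] at h2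
  have hgd : ∀ z ∈ s, HasDerivAt g (Complex.exp (L z)) z := by
    intro z hz
    have h1 := (hg.differentiableAt (hs.mem_nhds hz)).hasDerivAt
    rwa [← derivWithin_of_isOpen hs hz (f := g), ← hbranch z hz] at h1
  have hFdiff : ∀ i, DifferentiableOn ℂ (iteratedDerivWithin i f s) s := by
    intro i
    exact (hf.contDiffOn (n := ⊤) hs).differentiableOn_iteratedDerivWithin
      (by exact_mod_cast lt_top_iff_ne_top.mpr (by simp)) hu
  have hFcomp : ∀ (i : ℕ), ∀ z ∈ s, HasDerivAt (fun w => iteratedDerivWithin i f s (g w))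
      (iteratedDerivWithin (i+1) f s (g z) * Complex.exp (L z)) z := by
    intro i z hz
    have hgz : g z ∈ s := hgmap hz
    have h1 : DifferentiableAt ℂ (iteratedDerivWithin i f s) (g z) :=
      ((hFdiff i) (g z) hgz).differentiableAt (hs.mem_nhds hgz)
    have h2 := h1.hasDerivAt
    rw [← derivWithin_of_isOpen hs hgz, ← iteratedDerivWithin_succ] at h2
    exact h2.comp z (hgd z hz)
  have hterm : ∀ (A β : ℂ) (i : ℕ), ∀ z ∈ s,
      HasDerivAt (fun w => A * Complex.exp (β * L w) * iteratedDerivWithin i f s (g w))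
        ((-c) * (2*β) * A * Complex.exp ((β + 1/2) * L z) * iteratedDerivWithin i f s (g z)
          + A * Complex.exp ((β + 1) * L z) * iteratedDerivWithin (i+1) f s (g z)) z := by
    intro A β i z hz
    have h1 : HasDerivAt (fun w => Complex.exp (β * L w))
        (Complex.exp (β * L z) * (β * (-2 * c * Complex.exp ((1/2 : ℂ) * L z)))) z :=
      ((hLd z hz).const_mul β).cexp
    have h2 := (h1.const_mul A).mul (hFcomp i z hz)
    have h3 : (-c) * (2*β) * A * Complex.exp ((β + 1/2) * L z) * iteratedDerivWithin i f s (g z)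
          + A * Complex.exp ((β + 1) * L z) * iteratedDerivWithin (i+1) f s (g z)
        = A * (Complex.exp (β * L z) * (β * (-2 * c * Complex.exp ((1/2 : ℂ) * L z))))
            * iteratedDerivWithin i f s (g z)
          + A * Complex.exp (β * L z)
            * (iteratedDerivWithin (i+1) f s (g z) * Complex.exp (L z)) := by
      rw [show (β + 1/2) * L z = β * L z + (1/2 : ℂ) * L z from by ring,
          show (β + 1) * L z = β * L z + L z from by ring,
          Complex.exp_add, Complex.exp_add]
      ring
    rw [h3]
    exact h2
  induction k with
  | zero =>
    intro z hz
    simp [Finset.sum_range_one]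
  | succ k ih =>
    intro z hz
    have hcongr : derivWithin
        (iteratedDerivWithin k (fun w => Complex.exp (ℓ * L w) * f (g w)) s) s z
        = derivWithin (fun w => ∑ i ∈ range (k + 1),
            (k.choose i : ℂ) * (ascPochhammer ℂ (k - i)).eval (2 * ℓ + i)
              * (-c) ^ (k - i)
              * Complex.exp ((ℓ + (k + i : ℂ) / 2) * L w)
              * iteratedDerivWithin i f s (g w)) s z :=
      derivWithin_congr (fun w hw => ih w hw) (ih z hz)
    rw [iteratedDerivWithin_succ, hcongr, derivWithin_of_isOpen hs hz]
    have hder : HasDerivAt (fun w => ∑ i ∈ range (k + 1),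
          (k.choose i : ℂ) * (ascPochhammer ℂ (k - i)).eval (2 * ℓ + i)
            * (-c) ^ (k - i)
            * Complex.exp ((ℓ + (k + i : ℂ) / 2) * L w)
            * iteratedDerivWithin i f s (g w))
        (∑ i ∈ range (k + 1),
          ((-c) * (2 * ℓ + (k:ℂ) + (i:ℂ)) * pcAux (2 * ℓ) c k i
              * (Complex.exp ((ℓ + ((k:ℂ) + 1 + (i:ℂ)) / 2) * L z)
                  * iteratedDerivWithin i f s (g z))
            + pcAux (2 * ℓ) c k i
              * (Complex.exp ((ℓ + ((k:ℂ) + 1 + ((i+1:ℕ):ℂ)) / 2) * L z)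
                  * iteratedDerivWithin (i+1) f s (g z)))) z := by
      apply HasDerivAt.fun_sum
      intro i hi
      have h := hterm ((k.choose i : ℂ) * (ascPochhammer ℂ (k - i)).eval (2 * ℓ + i)
          * (-c) ^ (k - i)) (ℓ + ((k:ℂ) + (i:ℂ)) / 2) i z hz
      have heq : (-c) * (2 * ℓ + (k:ℂ) + (i:ℂ)) * pcAux (2 * ℓ) c k i
              * (Complex.exp ((ℓ + ((k:ℂ) + 1 + (i:ℂ)) / 2) * L z)
                  * iteratedDerivWithin i f s (g z))
            + pcAux (2 * ℓ) c k i
              * (Complex.exp ((ℓ + ((k:ℂ) + 1 + ((i+1:ℕ):ℂ)) / 2) * L z)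
                  * iteratedDerivWithin (i+1) f s (g z))
          = (-c) * (2 * (ℓ + ((k:ℂ) + (i:ℂ)) / 2))
              * ((k.choose i : ℂ) * (ascPochhammer ℂ (k - i)).eval (2 * ℓ + i)
                  * (-c) ^ (k - i))
              * Complex.exp ((ℓ + ((k:ℂ) + (i:ℂ)) / 2 + 1/2) * L z)
              * iteratedDerivWithin i f s (g z)
            + ((k.choose i : ℂ) * (ascPochhammer ℂ (k - i)).eval (2 * ℓ + i)
                  * (-c) ^ (k - i))
              * Complex.exp ((ℓ + ((k:ℂ) + (i:ℂ)) / 2 + 1) * L z)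
              * iteratedDerivWithin (i+1) f s (g z) := by
        rw [show ℓ + ((k:ℂ) + 1 + (i:ℂ)) / 2 = ℓ + ((k:ℂ) + (i:ℂ)) / 2 + 1/2 from by ring,
            show ℓ + ((k:ℂ) + 1 + ((i+1:ℕ):ℂ)) / 2 = ℓ + ((k:ℂ) + (i:ℂ)) / 2 + 1 from by
              push_cast; ring]
        simp only [pcAux]
        ring
      rw [heq]
      exact h
    rw [hder.deriv]
    refine (sum_shift k (2 * ℓ) c
      (fun j => Complex.exp ((ℓ + ((k:ℂ) + 1 + (j:ℂ)) / 2) * L z)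
        * iteratedDerivWithin j f s (g z))).trans ?_
    refine Finset.sum_congr rfl fun i hi => ?_
    simp only [pcAux]
    rw [show ℓ + (((k+1:ℕ):ℂ) + (i:ℂ)) / 2 = ℓ + ((k:ℂ) + 1 + (i:ℂ)) / 2 from by
      push_cast; ring]
    ring
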